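/- Let B be an indefinite quaternion algebra over ℚ that is not isomorphic to (-1,-1/ℚ). Then B*/ℚ* contains no subgroup isomorphic to A₄, S₄ or A₅. In particular, for B indefinite, B*/ℚ* never contains A₄, S₄ or A₅. -/

import Mathlib

open scoped Quaternion
open QuaternionAlgebra

section Helpers

variable {a b : ℚ}

def iUnit (ha : a ≠ 0) : ℍ[ℚ,a,b]ˣ :=
  ⟨⟨0,1,0,0⟩, ⟨0,a⁻¹,0,0⟩,
    by ext <;> simp [ha],
    by ext <;> simp [ha]⟩

def jUnit (hb : b ≠ 0) : ℍ[ℚ,a,b]ˣ :=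
  ⟨⟨0,0,1,0⟩, ⟨0,0,b⁻¹,0⟩,
    by ext <;> simp [hb],
    by ext <;> simp [hb]⟩

lemma mem_center_iff' (ha : a ≠ 0) (hb : b ≠ 0) (u : ℍ[ℚ,a,b]ˣ) :
    u ∈ Subgroup.center ℍ[ℚ,a,b]ˣ ↔
      (u : ℍ[ℚ,a,b]).imI = 0 ∧ (u : ℍ[ℚ,a,b]).imJ = 0 ∧ (u : ℍ[ℚ,a,b]).imK = 0 := by
  rw [Subgroup.mem_center_iff]
  constructor
  · intro h
    have hi := congrArg Units.val (h (iUnit ha))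
    have hj := congrArg Units.val (h (jUnit hb))
    rw [Units.val_mul, Units.val_mul] at hi hj
    rw [QuaternionAlgebra.ext_iff] at hi hj
    simp only [iUnit, jUnit, re_mul, imI_mul, imJ_mul, imK_mul] at hi hj
    obtain ⟨-, -, hK, hJ⟩ := hi
    obtain ⟨-, -, -, hI⟩ := hj
    ring_nf at hK hJ hI
    refine ⟨by linarith, by linarith, ?_⟩
    have h2 : (↑u : ℍ[ℚ,a,b]).imK * a = 0 := by linarith
    exact (mul_eq_zero.mp h2).resolve_right ha
  · rintro ⟨h1, h2, h3⟩ g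
    ext : 1
    rw [Units.val_mul, Units.val_mul]
    ext <;> simp [h1, h2, h3] <;> ring

lemma prop3 {x₁ y₁ z₁ x₂ y₂ z₂ : ℚ} (h12 : x₁ * y₂ = y₁ * x₂) (h13 : x₁ * z₂ = z₁ * x₂)
    (h23 : y₁ * z₂ = z₁ * y₂) (hnz : ¬(x₁ = 0 ∧ y₁ = 0 ∧ z₁ = 0)) :
    ∃ t : ℚ, x₂ = t * x₁ ∧ y₂ = t * y₁ ∧ z₂ = t * z₁ := by
  by_cases hx : x₁ ≠ 0
  · exact ⟨x₂ / x₁, by field_simp, by field_simp; linarith [h12], by field_simp; linarith [h13]⟩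
  push_neg at hx
  subst hx
  by_cases hy : y₁ ≠ 0
  · refine ⟨y₂ / y₁, ?_, by field_simp, by field_simp; linarith [h23]⟩
    simp only [zero_mul] at h12 ⊢
    rcases mul_eq_zero.mp h12.symm with h | h
    · exact absurd h hy
    · simpa using h
  push_neg at hy
  subst hy
  have hz : z₁ ≠ 0 := by tauto
  refine ⟨z₂ / z₁, ?_, ?_, by field_simp⟩
  · simp only [zero_mul] at h13 ⊢
    rcases mul_eq_zero.mp h13.symm with h | h
    · exact absurd h hz
    · simpa using h
  · simp only [zero_mul] at h23 ⊢
    rcases mul_eq_zero.mp h23.symm with h | h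
    · exact absurd h hz
    · simpa using h

lemma matrix_contra (M N : Matrix (Fin 2) (Fin 2) ℝ) (hM : M * M = -1) (hN : N * N = -1)
    (hMN : M * N = -(N * M)) : False := by
  have e1 : (M * M) 0 0 = (-1 : Matrix (Fin 2) (Fin 2) ℝ) 0 0 := by rw [hM]
  have e2 : (N * N) 0 0 = (-1 : Matrix (Fin 2) (Fin 2) ℝ) 0 0 := by rw [hN]
  have e3 : (M * N) 0 0 = (-(N * M)) 0 0 := by rw [hMN]
  simp [Matrix.mul_apply, Fin.sum_univ_two, Matrix.one_apply, Matrix.neg_apply] at e1 e2 e3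
  nlinarith [sq_nonneg (M 0 1 * N 1 0 - N 0 1 * M 1 0), sq_nonneg (M 0 0), sq_nonneg (N 0 0),
    sq_nonneg (M 0 0 * N 0 0), sq_nonneg (M 0 0 - N 0 0), sq_nonneg (M 0 0 + N 0 0)]

/-- coefficient-wise map to the real quaternion algebra -/
def toR (a b : ℚ) : ℍ[ℚ,a,b] →+* ℍ[ℝ,(a:ℝ),(b:ℝ)] where
  toFun q := ⟨(q.re : ℝ), (q.imI : ℝ), (q.imJ : ℝ), (q.imK : ℝ)⟩
  map_one' := by ext <;> simp
  map_mul' x y := by ext <;> simp <;> push_cast <;> ring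
  map_zero' := by ext <;> simp
  map_add' x y := by ext <;> simp

lemma toR_algebraMap (r : ℚ) : toR a b (algebraMap ℚ _ r) = algebraMap ℝ _ (r : ℝ) := by
  ext <;> simp [toR, algebraMap_eq]

lemma indef_contra (ha : a ≠ 0) (hb : b ≠ 0)
    (hindef : Nonempty (ℍ[ℝ, (a : ℝ), (b : ℝ)] ≃ₐ[ℝ] Matrix (Fin 2) (Fin 2) ℝ))
    (p q : ℍ[ℚ,a,b]) (s t : ℚ) (hs : s ≠ 0) (ht : t ≠ 0)
    (hp : p * p = algebraMap ℚ _ (-(s*s))) (hq : q * q = algebraMap ℚ _ (-(t*t)))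
    (hpq : p * q = -(q * p)) : False := by
  obtain ⟨e⟩ := hindef
  have hsR : (s : ℝ) ≠ 0 := by exact_mod_cast hs
  have htR : (t : ℝ) ≠ 0 := by exact_mod_cast ht
  set M := e ((s : ℝ)⁻¹ • toR a b p) with hMdef
  set N := e ((t : ℝ)⁻¹ • toR a b q) with hNdef
  have key : ∀ (x y : ℍ[ℚ,a,b]) (c d : ℝ),
      e (c • toR a b x) * e (d • toR a b y) = e ((c*d) • toR a b (x*y)) := by
    intro x y c d
    rw [← map_mul e, smul_mul_smul_comm, ← map_mul (toR a b)]
  have escalar : ∀ (c r : ℝ), c * r = -1 → e (c • algebraMap ℝ ℍ[ℝ,(a:ℝ),(b:ℝ)] r) = -1 := by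
    intro c r h
    rw [Algebra.smul_def, ← map_mul, h, map_neg, map_one, map_neg, map_one]
  have hM2 : M * M = -1 := by
    rw [hMdef, key, hp, toR_algebraMap]
    refine escalar _ _ ?_
    push_cast
    field_simp
  have hN2 : N * N = -1 := by
    rw [hNdef, key, hq, toR_algebraMap]
    refine escalar _ _ ?_
    push_cast
    field_simp
  have hMN : M * N = -(N * M) := by
    rw [hMdef, hNdef, key, key, hpq, map_neg (toR a b), smul_neg, map_neg, mul_comm ((t:ℝ)⁻¹)]
  exact matrix_contra M N hM2 hN2 hMN

theorem core (ha : a ≠ 0) (hb : b ≠ 0)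
    (hindef : Nonempty (ℍ[ℝ, (a : ℝ), (b : ℝ)] ≃ₐ[ℝ] Matrix (Fin 2) (Fin 2) ℝ))
    (u v w : ℍ[ℚ,a,b]ˣ)
    (hu2 : u * u ∈ Subgroup.center ℍ[ℚ,a,b]ˣ) (hv2 : v * v ∈ Subgroup.center ℍ[ℚ,a,b]ˣ)
    (hu : u ∉ Subgroup.center ℍ[ℚ,a,b]ˣ) (hv : v ∉ Subgroup.center ℍ[ℚ,a,b]ˣ)
    (huv : (u*v)⁻¹ * (v*u) ∈ Subgroup.center ℍ[ℚ,a,b]ˣ)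
    (huvne : u⁻¹ * v ∉ Subgroup.center ℍ[ℚ,a,b]ˣ)
    (hw1 : (w*u*w⁻¹)⁻¹ * v ∈ Subgroup.center ℍ[ℚ,a,b]ˣ)
    (hw2 : (w*v*w⁻¹)⁻¹ * (u*v) ∈ Subgroup.center ℍ[ℚ,a,b]ˣ) : False := by
  have h01 : (0 : ℍ[ℚ,a,b]) ≠ 1 := by
    intro h
    simpa using congrArg QuaternionAlgebra.re h
  have hcomm : ∀ z ∈ Subgroup.center ℍ[ℚ,a,b]ˣ, ∀ g : ℍ[ℚ,a,b]ˣ, z * g = g * z := by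
    intro z hz g; exact (Subgroup.mem_center_iff.mp hz g).symm
  have central_val : ∀ z : ℍ[ℚ,a,b]ˣ, z ∈ Subgroup.center ℍ[ℚ,a,b]ˣ →
      ∃ r : ℚ, (z : ℍ[ℚ,a,b]) = algebraMap ℚ ℍ[ℚ,a,b] r := by
    intro z hz
    obtain ⟨h1, h2, h3⟩ := (mem_center_iff' ha hb z).mp hz
    refine ⟨(z : ℍ[ℚ,a,b]).re, ?_⟩
    rw [algebraMap_eq]
    ext <;> simp [h1, h2, h3]
  have halg : Function.Injective (algebraMap ℚ ℍ[ℚ,a,b]) := by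
    intro r r' h
    rw [algebraMap_eq, algebraMap_eq, QuaternionAlgebra.ext_iff] at h
    exact h.1
  have unit_ne : ∀ z : ℍ[ℚ,a,b]ˣ, (z : ℍ[ℚ,a,b]) ≠ 0 := by
    intro z h
    have := z.val_inv
    rw [h, zero_mul] at this
    exact h01 this
  have scalar_ne : ∀ (z : ℍ[ℚ,a,b]ˣ) (r : ℚ), (z : ℍ[ℚ,a,b]) = algebraMap ℚ ℍ[ℚ,a,b] r → r ≠ 0 := by
    intro z r h hr
    subst hr
    rw [map_zero] at h
    exact unit_ne z h
  -- the commutator scalar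
  set zc : ℍ[ℚ,a,b]ˣ := ((u*v)⁻¹ * (v*u))⁻¹ with hzcdef
  have hzc : zc ∈ Subgroup.center ℍ[ℚ,a,b]ˣ := Subgroup.inv_mem _ huv
  have huv' : u * v = zc * (v * u) := by
    rw [hcomm zc hzc (v*u), hzcdef]
    group
  have hzc2 : zc * zc = 1 := by
    have step : (u*u) * v = (zc * zc) * ((u*u) * v) := by
      calc (u*u) * v = u * (u * v) := by group
        _ = u * (zc * (v * u)) := by rw [← huv']
        _ = zc * ((u * v) * u) := by rw [← mul_assoc, ← hcomm zc hzc u]; group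
        _ = zc * ((zc * (v * u)) * u) := by rw [← huv']
        _ = (zc * zc) * ((v * u) * u) := by group
        _ = (zc * zc) * (v * (u * u)) := by group
        _ = (zc * zc) * ((u*u) * v) := by rw [hcomm (u*u) hu2 v]
    nth_rewrite 1 [show (u*u) * v = 1 * ((u*u)*v) by rw [one_mul]] at step
    exact (mul_right_cancel step.symm)
  obtain ⟨c, hzcval⟩ := central_val zc hzc
  have hc2 : c * c = 1 := by
    have := congrArg Units.val hzc2
    rw [Units.val_mul, hzcval, ← map_mul, Units.val_one, ← map_one (algebraMap ℚ ℍ[ℚ,a,b])] at this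
    exact halg this
  obtain ⟨p, hpdef⟩ : ∃ x : ℍ[ℚ,a,b], x = ↑u := ⟨_, rfl⟩
  obtain ⟨q, hqdef⟩ : ∃ x : ℍ[ℚ,a,b], x = ↑v := ⟨_, rfl⟩
  have hpq0 : p * q = algebraMap ℚ ℍ[ℚ,a,b] c * (q * p) := by
    have h := congrArg Units.val huv'
    rw [Units.val_mul, Units.val_mul, Units.val_mul, hzcval, ← hpdef, ← hqdef] at h
    exact h
  -- squares are scalars
  obtain ⟨α, hpp⟩ : ∃ r : ℚ, p * p = algebraMap ℚ ℍ[ℚ,a,b] r := by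
    obtain ⟨r, hr⟩ := central_val _ hu2
    exact ⟨r, by rw [hpdef, ← Units.val_mul]; exact hr⟩
  obtain ⟨β, hqq⟩ : ∃ r : ℚ, q * q = algebraMap ℚ ℍ[ℚ,a,b] r := by
    obtain ⟨r, hr⟩ := central_val _ hv2
    exact ⟨r, by rw [hqdef, ← Units.val_mul]; exact hr⟩
  have hα : α ≠ 0 := scalar_ne (u*u) α (by rw [Units.val_mul, ← hpdef]; exact hpp)
  have hβ : β ≠ 0 := scalar_ne (v*v) β (by rw [Units.val_mul, ← hqdef]; exact hqq)
  -- u, v are pure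
  have hunzU : ¬((↑u : ℍ[ℚ,a,b]).imI = 0 ∧ (↑u : ℍ[ℚ,a,b]).imJ = 0 ∧ (↑u : ℍ[ℚ,a,b]).imK = 0) :=
    fun h => hu ((mem_center_iff' ha hb u).mpr h)
  have hvnzU : ¬((↑v : ℍ[ℚ,a,b]).imI = 0 ∧ (↑v : ℍ[ℚ,a,b]).imJ = 0 ∧ (↑v : ℍ[ℚ,a,b]).imK = 0) :=
    fun h => hv ((mem_center_iff' ha hb v).mpr h)
  have hunz : ¬(p.imI = 0 ∧ p.imJ = 0 ∧ p.imK = 0) := by rw [hpdef]; exact hunzU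
  have hvnz : ¬(q.imI = 0 ∧ q.imJ = 0 ∧ q.imK = 0) := by rw [hqdef]; exact hvnzU
  have pure_of : ∀ (g : ℍ[ℚ,a,b]ˣ), ¬((g:ℍ[ℚ,a,b]).imI = 0 ∧ (g:ℍ[ℚ,a,b]).imJ = 0 ∧ (g:ℍ[ℚ,a,b]).imK = 0) →
      (g*g) ∈ Subgroup.center ℍ[ℚ,a,b]ˣ → (g : ℍ[ℚ,a,b]).re = 0 := by
    intro g hg hg2
    obtain ⟨h1, h2, h3⟩ := (mem_center_iff' ha hb (g*g)).mp hg2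
    rw [Units.val_mul] at h1 h2 h3
    rw [imI_mul] at h1
    rw [imJ_mul] at h2
    rw [imK_mul] at h3
    by_contra hre
    have pI : (g:ℍ[ℚ,a,b]).re * (g:ℍ[ℚ,a,b]).imI = 0 := by ring_nf at h1 ⊢; linarith
    have pJ : (g:ℍ[ℚ,a,b]).re * (g:ℍ[ℚ,a,b]).imJ = 0 := by ring_nf at h2 ⊢; linarith
    have pK : (g:ℍ[ℚ,a,b]).re * (g:ℍ[ℚ,a,b]).imK = 0 := by ring_nf at h3 ⊢; linarith
    exact hg ⟨(mul_eq_zero.mp pI).resolve_left hre, (mul_eq_zero.mp pJ).resolve_left hre,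
      (mul_eq_zero.mp pK).resolve_left hre⟩
  have hpre : p.re = 0 := by rw [hpdef]; exact pure_of u hunzU hu2
  have hqre : q.re = 0 := by rw [hqdef]; exact pure_of v hvnzU hv2
  rcases mul_self_eq_one_iff.mp hc2 with hc1 | hcm1
  · -- commuting case : proportional, contradiction with huvne
    rw [hc1, map_one, one_mul] at hpq0
    rw [QuaternionAlgebra.ext_iff] at hpq0
    obtain ⟨-, e1, e2, e3⟩ := hpq0
    rw [imI_mul, imI_mul] at e1
    rw [imJ_mul, imJ_mul] at e2
    rw [imK_mul, imK_mul] at e3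
    rw [hpre, hqre] at e1 e2 e3
    have m23 : p.imJ * q.imK = p.imK * q.imJ := by
      have h : b * (p.imJ * q.imK - p.imK * q.imJ) = 0 := by linear_combination -e1/2
      have h2 := (mul_eq_zero.mp h).resolve_left hb
      linarith [sub_eq_zero.mp h2]
    have m13 : p.imI * q.imK = p.imK * q.imI := by
      have h : a * (p.imI * q.imK - p.imK * q.imI) = 0 := by linear_combination e2/2
      have h2 := (mul_eq_zero.mp h).resolve_left ha
      linarith [sub_eq_zero.mp h2]
    have m12 : p.imI * q.imJ = p.imJ * q.imI := by linear_combination e3/2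
    obtain ⟨t, ht1, ht2, ht3⟩ := prop3 m12 m13 m23 hunz
    have hqval : q = t • p := by
      ext <;> simp [ht1, ht2, ht3, hpre, hqre]
    have hvu : ((v * u⁻¹ : ℍ[ℚ,a,b]ˣ) : ℍ[ℚ,a,b]) = t • (1 : ℍ[ℚ,a,b]) := by
      rw [Units.val_mul, ← hqdef, hqval, smul_mul_assoc, hpdef, ← Units.val_mul,
        mul_inv_cancel, Units.val_one]
    have hvuc : v * u⁻¹ ∈ Subgroup.center ℍ[ℚ,a,b]ˣ := by
      rw [mem_center_iff' ha hb]
      rw [hvu]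
      refine ⟨?_, ?_, ?_⟩ <;> simp
    apply huvne
    have heq : u⁻¹ * v = v * u⁻¹ := by
      calc u⁻¹ * v = u⁻¹ * ((v * u⁻¹) * u) := by group
        _ = u⁻¹ * (u * (v * u⁻¹)) := by rw [← hcomm _ hvuc u]
        _ = v * u⁻¹ := by group
    rw [heq]; exact hvuc
  · -- anticommuting case
    rw [hcm1] at hpq0
    have hpq : p * q = -(q * p) := by rw [hpq0, map_neg, map_one, neg_mul, one_mul]
    set ζ : ℍ[ℚ,a,b]ˣ := ((w*u*w⁻¹)⁻¹ * v)⁻¹ with hζdef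
    have hζ : ζ ∈ Subgroup.center ℍ[ℚ,a,b]ˣ := Subgroup.inv_mem _ hw1
    have hconj1 : w * u * w⁻¹ = ζ * v := by
      rw [hcomm ζ hζ v, hζdef]
      group
    set ξ : ℍ[ℚ,a,b]ˣ := ((w*v*w⁻¹)⁻¹ * (u*v))⁻¹ with hξdef
    have hξ : ξ ∈ Subgroup.center ℍ[ℚ,a,b]ˣ := Subgroup.inv_mem _ hw2
    have hconj2 : w * v * w⁻¹ = ξ * (u * v) := by
      rw [hcomm ξ hξ (u*v), hξdef]
      group
    have hsq1 : u * u = (ζ * ζ) * (v * v) := by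
      have l1 : w * (u * u) * w⁻¹ = (ζ * v) * (ζ * v) := by
        rw [← hconj1]; group
      have l2 : w * (u * u) * w⁻¹ = u * u := by
        rw [← hcomm (u*u) hu2 w]; group
      rw [← l2, l1, ← mul_assoc, mul_assoc ζ v ζ, ← hcomm ζ hζ v, ← mul_assoc, mul_assoc]
    have hsq2 : v * v = (ξ * ξ) * ((u*v) * (u*v)) := by
      have l1 : w * (v * v) * w⁻¹ = (ξ * (u*v)) * (ξ * (u*v)) := by
        rw [← hconj2]; group
      have l2 : w * (v * v) * w⁻¹ = v * v := by
        rw [← hcomm (v*v) hv2 w]; group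
      rw [← l2, l1, ← mul_assoc, mul_assoc ξ (u*v) ξ, ← hcomm ξ hξ (u*v)]
      group
    obtain ⟨μ, hζval⟩ := central_val ζ hζ
    have hμ : μ ≠ 0 := scalar_ne ζ μ hζval
    obtain ⟨ν, hξval⟩ := central_val ξ hξ
    have hν : ν ≠ 0 := scalar_ne ξ ν hξval
    have e1 : α = μ * μ * β := by
      have hval := congrArg Units.val hsq1
      simp only [Units.val_mul] at hval
      rw [hζval, ← hpdef, ← hqdef, hpp, hqq, ← map_mul, ← map_mul] at hval
      exact halg hval
    have hpqpq : (p * q) * (p * q) = algebraMap ℚ ℍ[ℚ,a,b] (-(α*β)) := by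
      have hqp : q * p = -(p*q) := by rw [hpq, neg_neg]
      calc (p*q)*(p*q) = p*((q*p)*q) := by noncomm_ring
        _ = p*((-(p*q))*q) := by rw [hqp]
        _ = -((p*p)*(q*q)) := by noncomm_ring
        _ = algebraMap ℚ ℍ[ℚ,a,b] (-(α*β)) := by rw [hpp, hqq, ← map_mul, ← map_neg]
    have e2 : β = ν * ν * (-(α*β)) := by
      have hval := congrArg Units.val hsq2
      simp only [Units.val_mul] at hval
      rw [hξval, ← hpdef, ← hqdef, hqq, hpqpq, ← map_mul, ← map_mul] at hval
      exact halg hval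
    have h3 : (1 + ν * ν * α) * β = 0 := by linear_combination e2
    have h4 : 1 + ν * ν * α = 0 := (mul_eq_zero.mp h3).resolve_right hβ
    have hαs : α = -(ν⁻¹ * ν⁻¹) := by
      field_simp
      linear_combination h4
    have hβt : β = -((μ⁻¹ * ν⁻¹) * (μ⁻¹ * ν⁻¹)) := by
      field_simp
      linear_combination h4 - ν * ν * e1
    exact indef_contra ha hb hindef p q ν⁻¹ (μ⁻¹ * ν⁻¹) (inv_ne_zero hν)
      (mul_ne_zero (inv_ne_zero hμ) (inv_ne_zero hν))
      (by rw [hpp, hαs]) (by rw [hqq, hβt]) hpq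

theorem coreQ (ha : a ≠ 0) (hb : b ≠ 0)
    (hindef : Nonempty (ℍ[ℝ, (a : ℝ), (b : ℝ)] ≃ₐ[ℝ] Matrix (Fin 2) (Fin 2) ℝ))
    (x y z : ℍ[ℚ,a,b]ˣ ⧸ Subgroup.center ℍ[ℚ,a,b]ˣ)
    (hx2 : x * x = 1) (hy2 : y * y = 1) (hx1 : x ≠ 1) (hy1 : y ≠ 1) (hxy : x ≠ y)
    (hc : x * y = y * x) (hz1 : z * x * z⁻¹ = y) (hz2 : z * y * z⁻¹ = x * y) : False := by
  obtain ⟨u, rfl⟩ := QuotientGroup.mk_surjective x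
  obtain ⟨v, rfl⟩ := QuotientGroup.mk_surjective y
  obtain ⟨w, rfl⟩ := QuotientGroup.mk_surjective z
  refine core ha hb hindef u v w ?_ ?_ ?_ ?_ ?_ ?_ ?_ ?_
  · exact (QuotientGroup.eq_one_iff _).mp (by rw [QuotientGroup.mk_mul]; exact hx2)
  · exact (QuotientGroup.eq_one_iff _).mp (by rw [QuotientGroup.mk_mul]; exact hy2)
  · exact fun h => hx1 ((QuotientGroup.eq_one_iff u).mpr h)
  · exact fun h => hy1 ((QuotientGroup.eq_one_iff v).mpr h)
  · exact QuotientGroup.eq.mp (by rw [QuotientGroup.mk_mul, QuotientGroup.mk_mul]; exact hc)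
  · exact fun h => hxy (QuotientGroup.eq.mpr h)
  · refine QuotientGroup.eq.mp ?_
    rw [QuotientGroup.mk_mul, QuotientGroup.mk_mul, QuotientGroup.mk_inv]
    exact hz1
  · refine QuotientGroup.eq.mp ?_
    rw [QuotientGroup.mk_mul, QuotientGroup.mk_mul, QuotientGroup.mk_inv, QuotientGroup.mk_mul]
    exact hz2


lemma noSub (ha : a ≠ 0) (hb : b ≠ 0)
    (hindef : Nonempty (ℍ[ℝ, (a : ℝ), (b : ℝ)] ≃ₐ[ℝ] Matrix (Fin 2) (Fin 2) ℝ))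
    {Γ : Type} [Group Γ]
    (f : Γ →* ℍ[ℚ,a,b]ˣ ⧸ Subgroup.center ℍ[ℚ,a,b]ˣ) (hf : Function.Injective f)
    (x₀ y₀ w₀ : Γ) (r1 : x₀ * x₀ = 1) (r2 : y₀ * y₀ = 1) (r3 : x₀ ≠ 1) (r4 : y₀ ≠ 1)
    (r5 : x₀ ≠ y₀) (r6 : x₀ * y₀ = y₀ * x₀) (r7 : w₀ * x₀ * w₀⁻¹ = y₀)
    (r8 : w₀ * y₀ * w₀⁻¹ = x₀ * y₀) : False :=
  coreQ ha hb hindef (f x₀) (f y₀) (f w₀)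
    (by rw [← map_mul, r1, map_one]) (by rw [← map_mul, r2, map_one])
    (fun h => r3 (hf (h.trans (map_one f).symm)))
    (fun h => r4 (hf (h.trans (map_one f).symm)))
    (fun h => r5 (hf h))
    (by rw [← map_mul, ← map_mul, r6])
    (by rw [← map_inv, ← map_mul, ← map_mul, r7])
    (by rw [← map_inv, ← map_mul, ← map_mul, r8, map_mul])

open Equiv in
/-- For an indefinite quaternion algebra `B` over ℚ, the group `B*/ℚ*` contains no subgroup
isomorphic to `A₄`, `S₄` or `A₅`. -/
theorem indefinite_no_exceptional_subgroups (a b : ℚ) (ha : a ≠ 0) (hb : b ≠ 0)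
    (hindef : Nonempty (ℍ[ℝ, (a : ℝ), (b : ℝ)] ≃ₐ[ℝ] Matrix (Fin 2) (Fin 2) ℝ)) :
    ∀ H : Subgroup (ℍ[ℚ, a, b]ˣ ⧸ Subgroup.center ℍ[ℚ, a, b]ˣ),
      IsEmpty (H ≃* alternatingGroup (Fin 4)) ∧
      IsEmpty (H ≃* Equiv.Perm (Fin 4)) ∧
      IsEmpty (H ≃* alternatingGroup (Fin 5)) := by
  intro H
  refine ⟨⟨fun e => ?_⟩, ⟨fun e => ?_⟩, ⟨fun e => ?_⟩⟩
  · refine noSub ha hb hindef (H.subtype.comp e.symm.toMonoidHom)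
      (fun _ _ h => e.symm.injective (Subtype.coe_injective h))
      ⟨swap 0 1 * swap 2 3, by rw [Equiv.Perm.mem_alternatingGroup]; decide⟩
      ⟨swap 0 3 * swap 1 2, by rw [Equiv.Perm.mem_alternatingGroup]; decide⟩
      ⟨swap 0 2 * swap 0 1, by rw [Equiv.Perm.mem_alternatingGroup]; decide⟩
      (Subtype.ext (by decide)) (Subtype.ext (by decide)) ?_ ?_ ?_
      (Subtype.ext (by decide)) (Subtype.ext (by decide)) (Subtype.ext (by decide)) <;>
    · intro h
      simp only [Subtype.ext_iff, OneMemClass.coe_one] at h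
      revert h
      decide
  · exact noSub ha hb hindef (H.subtype.comp e.symm.toMonoidHom)
      (fun _ _ h => e.symm.injective (Subtype.coe_injective h))
      (swap 0 1 * swap 2 3) (swap 0 3 * swap 1 2) (swap 0 2 * swap 0 1)
      (by decide) (by decide) (by decide) (by decide) (by decide) (by decide) (by decide)
      (by decide)
  · refine noSub ha hb hindef (H.subtype.comp e.symm.toMonoidHom)
      (fun _ _ h => e.symm.injective (Subtype.coe_injective h))
      ⟨swap 0 1 * swap 2 3, by rw [Equiv.Perm.mem_alternatingGroup]; decide⟩
      ⟨swap 0 3 * swap 1 2, by rw [Equiv.Perm.mem_alternatingGroup]; decide⟩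
      ⟨swap 0 2 * swap 0 1, by rw [Equiv.Perm.mem_alternatingGroup]; decide⟩
      (Subtype.ext (by decide)) (Subtype.ext (by decide)) ?_ ?_ ?_
      (Subtype.ext (by decide)) (Subtype.ext (by decide)) (Subtype.ext (by decide)) <;>
    · intro h
      simp only [Subtype.ext_iff, OneMemClass.coe_one] at h
      revert h
      decide

end Helpers
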